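/- The function A(x,t) = e^{i·t²/10} · e^{(1+i)x + 2·cos(t)} / (1 + (1/8)·e^{2x + 4·cos(t)}) satisfies i·A_t + sin(t)·A_xx + (t/5)·A + sin(t)·|A|²·A = 0 for all (x,t) ∈ ℝ². -/

import Mathlib

set_option maxHeartbeats 1600000


/-- The one-soliton solution of the vcNLS equation with trigonometric coefficients
`α(t) = γ(t) = sin t`, `β(t) = t/5`. -/
theorem vcNLS_soliton_sine_coefficients :
    let A : ℝ → ℝ → ℂ := fun x t =>
      Complex.exp (Complex.I * (t : ℂ) ^ 2 / 10) *
        Complex.exp ((1 + Complex.I) * (x : ℂ) + 2 * (Real.cos t : ℂ)) /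
        (1 + (1 / 8) * Complex.exp (2 * (x : ℂ) + 4 * (Real.cos t : ℂ)))
    ∀ x t : ℝ,
      Complex.I * deriv (fun τ => A x τ) t
        + ((Real.sin t : ℝ) : ℂ) * deriv (deriv (fun y => A y t)) x
        + ((t / 5 : ℝ) : ℂ) * A x t
        + ((Real.sin t : ℝ) : ℂ) * (‖A x t‖ : ℂ) ^ 2 * A x t = 0 := by
  intro A x t
  simp only [A]
  -- nonvanishing of the (complex) denominator at every real point
  have hVne : ∀ y : ℝ, (1:ℂ) + (1/8) * Complex.exp (2*(y:ℂ) + 4*(Real.cos t:ℂ)) ≠ 0 := by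
    intro y
    have h : (1:ℂ) + (1/8) * Complex.exp (2*(y:ℂ) + 4*(Real.cos t:ℂ))
        = ((1 + (1/8) * Real.exp (2*y + 4*Real.cos t) : ℝ) : ℂ) := by
      push_cast [Complex.ofReal_exp]; ring_nf
    rw [h]
    exact_mod_cast (by positivity : (1 + (1/8) * Real.exp (2*y + 4*Real.cos t) : ℝ) ≠ 0)
  -- first x-derivative
  have hW : ∀ y : ℝ, HasDerivAt
      (fun y : ℝ => Complex.exp (Complex.I * (t:ℂ)^2/10) *
          Complex.exp ((1+Complex.I)*(y:ℂ) + 2*(Real.cos t:ℂ)) /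
          (1 + (1/8)*Complex.exp (2*(y:ℂ) + 4*(Real.cos t:ℂ))))
      (Complex.exp (Complex.I * (t:ℂ)^2/10) *
          Complex.exp ((1+Complex.I)*(y:ℂ) + 2*(Real.cos t:ℂ)) *
          ((1+Complex.I)*(1 + (1/8)*Complex.exp (2*(y:ℂ) + 4*(Real.cos t:ℂ)))
            - Complex.exp (2*(y:ℂ) + 4*(Real.cos t:ℂ))/4)
          / (1 + (1/8)*Complex.exp (2*(y:ℂ) + 4*(Real.cos t:ℂ)))^2) y := by
    intro y
    have hnum : HasDerivAt
        (fun w : ℂ => Complex.exp (Complex.I * (t:ℂ)^2/10) *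
          Complex.exp ((1+Complex.I)*w + 2*(Real.cos t:ℂ)))
        (Complex.exp (Complex.I * (t:ℂ)^2/10) *
          (Complex.exp ((1+Complex.I)*(y:ℂ) + 2*(Real.cos t:ℂ)) * ((1+Complex.I)*1))) (y:ℂ) :=
      ((((hasDerivAt_id ((y:ℝ):ℂ)).const_mul (1+Complex.I)).add_const
          (2*(Real.cos t:ℂ))).cexp).const_mul _
    have hden : HasDerivAt
        (fun w : ℂ => (1:ℂ) + (1/8)*Complex.exp (2*w + 4*(Real.cos t:ℂ)))
        ((1/8) * (Complex.exp (2*(y:ℂ) + 4*(Real.cos t:ℂ)) * (2*1))) (y:ℂ) :=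
      (((((hasDerivAt_id ((y:ℝ):ℂ)).const_mul 2).add_const
          (4*(Real.cos t:ℂ))).cexp).const_mul (1/8)).const_add 1
    have h := ((hnum.div hden (hVne y)).comp_ofReal)
    convert h using 1
    congr 1
    ring
  have hderiv1 : deriv (fun y : ℝ => Complex.exp (Complex.I * (t:ℂ)^2/10) *
          Complex.exp ((1+Complex.I)*(y:ℂ) + 2*(Real.cos t:ℂ)) /
          (1 + (1/8)*Complex.exp (2*(y:ℂ) + 4*(Real.cos t:ℂ))))
      = fun y : ℝ => Complex.exp (Complex.I * (t:ℂ)^2/10) *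
          Complex.exp ((1+Complex.I)*(y:ℂ) + 2*(Real.cos t:ℂ)) *
          ((1+Complex.I)*(1 + (1/8)*Complex.exp (2*(y:ℂ) + 4*(Real.cos t:ℂ)))
            - Complex.exp (2*(y:ℂ) + 4*(Real.cos t:ℂ))/4)
          / (1 + (1/8)*Complex.exp (2*(y:ℂ) + 4*(Real.cos t:ℂ)))^2 :=
    funext fun y => (hW y).deriv
  -- second x-derivative
  have hW2 : HasDerivAt
      (fun y : ℝ => Complex.exp (Complex.I * (t:ℂ)^2/10) *
          Complex.exp ((1+Complex.I)*(y:ℂ) + 2*(Real.cos t:ℂ)) *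
          ((1+Complex.I)*(1 + (1/8)*Complex.exp (2*(y:ℂ) + 4*(Real.cos t:ℂ)))
            - Complex.exp (2*(y:ℂ) + 4*(Real.cos t:ℂ))/4)
          / (1 + (1/8)*Complex.exp (2*(y:ℂ) + 4*(Real.cos t:ℂ)))^2)
      (Complex.exp (Complex.I * (t:ℂ)^2/10) *
          Complex.exp ((1+Complex.I)*(x:ℂ) + 2*(Real.cos t:ℂ)) *
          (2*Complex.I*(1 + (1/8)*Complex.exp (2*(x:ℂ) + 4*(Real.cos t:ℂ)))^2
            - (Complex.exp (2*(x:ℂ) + 4*(Real.cos t:ℂ))/2) * (2+Complex.I)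
                * (1 + (1/8)*Complex.exp (2*(x:ℂ) + 4*(Real.cos t:ℂ)))
            + Complex.exp (2*(x:ℂ) + 4*(Real.cos t:ℂ))^2/8)
          / (1 + (1/8)*Complex.exp (2*(x:ℂ) + 4*(Real.cos t:ℂ)))^3) x := by
    have hN : HasDerivAt (fun w : ℂ => Complex.exp ((1+Complex.I)*w + 2*(Real.cos t:ℂ)))
        (Complex.exp ((1+Complex.I)*(x:ℂ) + 2*(Real.cos t:ℂ)) * ((1+Complex.I)*1)) (x:ℂ) :=
      (((hasDerivAt_id ((x:ℝ):ℂ)).const_mul (1+Complex.I)).add_const (2*(Real.cos t:ℂ))).cexp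
    have hE : HasDerivAt (fun w : ℂ => Complex.exp (2*w + 4*(Real.cos t:ℂ)))
        (Complex.exp (2*(x:ℂ) + 4*(Real.cos t:ℂ)) * (2*1)) (x:ℂ) :=
      (((hasDerivAt_id ((x:ℝ):ℂ)).const_mul 2).add_const (4*(Real.cos t:ℂ))).cexp
    have hV : HasDerivAt (fun w : ℂ => (1:ℂ) + (1/8)*Complex.exp (2*w + 4*(Real.cos t:ℂ)))
        ((1/8) * (Complex.exp (2*(x:ℂ) + 4*(Real.cos t:ℂ)) * (2*1))) (x:ℂ) :=
      (hE.const_mul (1/8)).const_add 1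
    have hnum := (hN.const_mul (Complex.exp (Complex.I * (t:ℂ)^2/10))).mul
        ((hV.const_mul (1+Complex.I)).sub (hE.div_const 4))
    have hden := hV.pow 2
    have h := ((hnum.div hden (pow_ne_zero 2 (hVne x))).comp_ofReal)
    convert h using 1
    · rfl
    rw [div_eq_div_iff (pow_ne_zero 3 (hVne x)) (by
      exact pow_ne_zero 2 (pow_ne_zero 2 (hVne x)))]
    simp only [Pi.mul_apply, Pi.sub_apply, Pi.pow_apply]
    linear_combination (-(Complex.exp (Complex.I * (t:ℂ)^2/10) *
        Complex.exp ((1+Complex.I)*(x:ℂ) + 2*(Real.cos t:ℂ)) *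
        (1 + (1/8)*Complex.exp (2*(x:ℂ) + 4*(Real.cos t:ℂ)))^6)) * Complex.I_sq
  -- t-derivative
  have hF : HasDerivAt
      (fun z : ℂ => Complex.exp (Complex.I * z ^ 2 / 10) *
          Complex.exp ((1 + Complex.I) * (x : ℂ) + 2 * Complex.cos z) /
          (1 + (1 / 8) * Complex.exp (2 * (x : ℂ) + 4 * Complex.cos z)))
      (Complex.exp (Complex.I * (t:ℂ) ^ 2 / 10) *
          Complex.exp ((1 + Complex.I) * (x : ℂ) + 2 * Complex.cos (t:ℂ)) *
          ((Complex.I * (t:ℂ)/5 - 2 * Complex.sin (t:ℂ)) *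
              (1 + (1/8) * Complex.exp (2*(x:ℂ) + 4*Complex.cos (t:ℂ)))
            + (Complex.sin (t:ℂ)/2) * Complex.exp (2*(x:ℂ) + 4*Complex.cos (t:ℂ)))
          / (1 + (1/8) * Complex.exp (2*(x:ℂ) + 4*Complex.cos (t:ℂ)))^2)
      (t:ℂ) := by
    have hVc : (1:ℂ) + (1/8) * Complex.exp (2*(x:ℂ) + 4*Complex.cos (t:ℂ)) ≠ 0 := by
      rw [← Complex.ofReal_cos]; exact hVne x
    have h1 : HasDerivAt (fun z : ℂ => Complex.exp (Complex.I * z ^ 2 / 10))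
        (Complex.exp (Complex.I * (t:ℂ)^2/10) * (Complex.I * (↑2 * (t:ℂ)^1) / 10)) (t:ℂ) :=
      (((hasDerivAt_pow 2 (t:ℂ)).const_mul Complex.I).div_const 10).cexp
    have h2 : HasDerivAt (fun z : ℂ => Complex.exp ((1 + Complex.I) * (x : ℂ) + 2 * Complex.cos z))
        (Complex.exp ((1 + Complex.I) * (x : ℂ) + 2 * Complex.cos (t:ℂ)) * (2 * -Complex.sin (t:ℂ)))
        (t:ℂ) :=
      (((Complex.hasDerivAt_cos (t:ℂ)).const_mul 2).const_add ((1 + Complex.I) * (x : ℂ))).cexp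
    have h3 : HasDerivAt (fun z : ℂ => (1:ℂ) + (1 / 8) * Complex.exp (2 * (x : ℂ) + 4 * Complex.cos z))
        ((1/8) * (Complex.exp (2 * (x : ℂ) + 4 * Complex.cos (t:ℂ)) * (4 * -Complex.sin (t:ℂ)))) (t:ℂ) :=
      (((((Complex.hasDerivAt_cos (t:ℂ)).const_mul 4).const_add (2 * (x : ℂ))).cexp).const_mul (1/8)).const_add 1
    have h := (h1.mul h2).div h3 hVc
    convert h using 1
    · rfl
    · rfl
    · rfl
    simp only [Pi.mul_apply]
    congr 1
    ring
  have hdt : deriv (fun τ : ℝ => Complex.exp (Complex.I * (τ:ℂ) ^ 2 / 10) *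
          Complex.exp ((1 + Complex.I) * (x : ℂ) + 2 * (Real.cos τ : ℂ)) /
          (1 + (1 / 8) * Complex.exp (2 * (x : ℂ) + 4 * (Real.cos τ : ℂ)))) t
      = Complex.exp (Complex.I * (t:ℂ) ^ 2 / 10) *
          Complex.exp ((1 + Complex.I) * (x : ℂ) + 2 * (Real.cos t : ℂ)) *
          ((Complex.I * (t:ℂ)/5 - 2 * (Real.sin t : ℂ)) *
              (1 + (1/8) * Complex.exp (2*(x:ℂ) + 4*(Real.cos t : ℂ)))
            + ((Real.sin t : ℂ)/2) * Complex.exp (2*(x:ℂ) + 4*(Real.cos t : ℂ)))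
          / (1 + (1/8) * Complex.exp (2*(x:ℂ) + 4*(Real.cos t : ℂ)))^2 := by
    have hfeq : (fun τ : ℝ => Complex.exp (Complex.I * (τ:ℂ) ^ 2 / 10) *
          Complex.exp ((1 + Complex.I) * (x : ℂ) + 2 * (Real.cos τ : ℂ)) /
          (1 + (1 / 8) * Complex.exp (2 * (x : ℂ) + 4 * (Real.cos τ : ℂ))))
        = (fun τ : ℝ => Complex.exp (Complex.I * ((τ:ℂ)) ^ 2 / 10) *
          Complex.exp ((1 + Complex.I) * (x : ℂ) + 2 * Complex.cos (τ:ℂ)) /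
          (1 + (1 / 8) * Complex.exp (2 * (x : ℂ) + 4 * Complex.cos (τ:ℂ)))) := by
      funext τ; simp only [Complex.ofReal_cos]
    rw [hfeq, (hF.comp_ofReal).deriv, Complex.ofReal_cos, Complex.ofReal_sin]
  -- norm squared
  have hnorm : ((‖Complex.exp (Complex.I * (t:ℂ) ^ 2 / 10) *
        Complex.exp ((1 + Complex.I) * (x : ℂ) + 2 * (Real.cos t : ℂ)) /
        (1 + (1 / 8) * Complex.exp (2 * (x : ℂ) + 4 * (Real.cos t : ℂ)))‖ : ℝ) : ℂ)^2
      = ((Real.exp (2*x + 4*Real.cos t) : ℝ) : ℂ)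
          / (((1 + (1/8) * Real.exp (2*x + 4*Real.cos t) : ℝ)) : ℂ)^2 := by
    have e1 : ‖Complex.exp (Complex.I * (t:ℂ)^2/10)‖ = 1 := by
      rw [show Complex.I * (t:ℂ)^2/10 = ((t^2/10 : ℝ):ℂ) * Complex.I by push_cast; ring]
      rw [Complex.norm_exp_ofReal_mul_I]
    have e2 : ‖Complex.exp ((1+Complex.I) * (x:ℂ) + 2*(Real.cos t:ℂ))‖
        = Real.exp (x + 2*Real.cos t) := by
      rw [Complex.norm_exp]
      norm_num [Complex.add_re, Complex.mul_re, Complex.cos_ofReal_re]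
    have e3 : ‖(1:ℂ) + (1/8) * Complex.exp (2*(x:ℂ) + 4*(Real.cos t:ℂ))‖
        = 1 + (1/8) * Real.exp (2*x + 4*Real.cos t) := by
      rw [show (1:ℂ) + (1/8) * Complex.exp (2*(x:ℂ) + 4*(Real.cos t:ℂ))
          = ((1 + (1/8) * Real.exp (2*x + 4*Real.cos t) : ℝ) : ℂ) by
        push_cast [Complex.ofReal_exp]; ring_nf]
      rw [Complex.norm_real, Real.norm_eq_abs, abs_of_pos (by positivity)]
    rw [norm_div, norm_mul, e1, e2, e3, one_mul]
    have : Real.exp (x + 2*Real.cos t) ^ 2 = Real.exp (2*x + 4*Real.cos t) := by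
      rw [sq, ← Real.exp_add]; ring_nf
    push_cast [← this]
    rw [div_pow]
  rw [hdt, hderiv1, hW2.deriv, hnorm]
  -- replace the complex exponential of a real argument by a real exponential
  have hE2 : Complex.exp (2*(x:ℂ) + 4*(Real.cos t:ℂ))
      = ((Real.exp (2*x + 4*Real.cos t) : ℝ) : ℂ) := by
    push_cast [Complex.ofReal_exp]; ring_nf
  rw [hE2]
  have hne : (1:ℂ) + (1/8) * ((Real.exp (2*x + 4*Real.cos t) : ℝ) : ℂ) ≠ 0 := by
    rw [← hE2]; exact hVne x
  have hne' : (((1 + (1/8) * Real.exp (2*x + 4*Real.cos t) : ℝ)) : ℂ) ≠ 0 :=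
    Complex.ofReal_ne_zero.mpr (by positivity)
  have hcast : (((1 + (1/8) * Real.exp (2*x + 4*Real.cos t) : ℝ)) : ℂ)
      = (1:ℂ) + (1/8) * ((Real.exp (2*x + 4*Real.cos t) : ℝ) : ℂ) := by push_cast; ring
  rw [hcast]
  -- handle I^2 in the time-derivative term
  have hI : Complex.I * (Complex.exp (Complex.I * (t:ℂ) ^ 2 / 10) *
          Complex.exp ((1 + Complex.I) * (x : ℂ) + 2 * (Real.cos t : ℂ)) *
          ((Complex.I * (t:ℂ)/5 - 2 * (Real.sin t : ℂ)) *
              (1 + (1/8) * ((Real.exp (2*x + 4*Real.cos t) : ℝ) : ℂ))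
            + ((Real.sin t : ℂ)/2) * ((Real.exp (2*x + 4*Real.cos t) : ℝ) : ℂ))
          / (1 + (1/8) * ((Real.exp (2*x + 4*Real.cos t) : ℝ) : ℂ))^2)
      = Complex.exp (Complex.I * (t:ℂ) ^ 2 / 10) *
          Complex.exp ((1 + Complex.I) * (x : ℂ) + 2 * (Real.cos t : ℂ)) *
          ((-(t:ℂ)/5 - 2 * (Real.sin t : ℂ) * Complex.I) *
              (1 + (1/8) * ((Real.exp (2*x + 4*Real.cos t) : ℝ) : ℂ))
            + Complex.I * ((Real.sin t : ℂ)/2) * ((Real.exp (2*x + 4*Real.cos t) : ℝ) : ℂ))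
          / (1 + (1/8) * ((Real.exp (2*x + 4*Real.cos t) : ℝ) : ℂ))^2 := by
    rw [← mul_div_assoc]
    congr 1
    linear_combination (Complex.exp (Complex.I * (t:ℂ) ^ 2 / 10) *
        Complex.exp ((1 + Complex.I) * (x : ℂ) + 2 * (Real.cos t : ℂ)) *
        (1 + (1/8) * ((Real.exp (2*x + 4*Real.cos t) : ℝ) : ℂ)) * ((t:ℂ)/5)) * Complex.I_sq
  rw [hI, show ((t/5 : ℝ):ℂ) = (t:ℂ)/5 by push_cast; ring]
  set V : ℂ := 1 + (1/8) * ((Real.exp (2*x + 4*Real.cos t) : ℝ) : ℂ) with hVdef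
  rw [show ((Real.exp (2*x + 4*Real.cos t) : ℝ) : ℂ) = 8*(V - 1) by rw [hVdef]; ring]
  field_simp [hne]
  ring
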